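/- Over the tropical semiring T = ℝ ∪ {-∞}, consider the linear map μ : T^4 → T^4, μ(x,y,z,t) = (x, y, z+1, t), and the matrices A with columns (-∞,-∞,0,-∞), (0,-∞,0,-∞), (1,1,0,-∞), (1,1,0,-∞) and B with columns (-∞,-∞,0,-∞), (0,-∞,0,-∞), (1,1,0,-∞), (1,0,0,-∞). Then μ maps the column space of A injectively into the column space of B, and μ maps the column space of B injectively into the column space of A. -/

import Mathlib

/-- The tropical column space of a matrix over `T = ℝ ∪ {-∞} = WithBot ℝ`:
all tropical linear combinations `max_k (λ_k + c_k)` of the columns, with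
coefficients `λ_k ∈ T`. -/
def tropColSpace (M : Matrix (Fin 4) (Fin 4) (WithBot ℝ)) :
    Set (Fin 4 → WithBot ℝ) :=
  {v | ∃ lam : Fin 4 → WithBot ℝ,
    v = fun i => Finset.univ.sup fun k => lam k + M i k}

/-- The linear map `μ(x,y,z,t) = (x, y, z+1, t)` on `T⁴`. -/
def muMap (v : Fin 4 → WithBot ℝ) : Fin 4 → WithBot ℝ :=
  fun i => if i = 2 then v i + 1 else v i

lemma sup4 (f : Fin 4 → WithBot ℝ) : Finset.univ.sup f = f 0 ⊔ f 1 ⊔ f 2 ⊔ f 3 := by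
  have h : (Finset.univ : Finset (Fin 4)) = {0,1,2,3} := by decide
  rw [h]; simp [Finset.sup_insert, sup_assoc]

lemma wb_le_add_one (x : WithBot ℝ) : x ≤ x + 1 :=
  le_add_of_nonneg_right (by norm_num)

lemma wb_neg_one_cancel (x : WithBot ℝ) : x + ((-1:ℝ):WithBot ℝ) + 1 = x := by
  rw [add_assoc, show ((-1:ℝ):WithBot ℝ) + 1 = 0 by
    rw [show (1:WithBot ℝ) = ((1:ℝ):WithBot ℝ) from rfl, ← WithBot.coe_add]; norm_num, add_zero]

lemma wb_add_neg_one_le (x : WithBot ℝ) : x + ((-1:ℝ):WithBot ℝ) ≤ x := by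
  calc x + ((-1:ℝ):WithBot ℝ) ≤ x + 0 := by
        exact add_le_add_right (by exact_mod_cast (by norm_num : (-1:ℝ) ≤ (0:ℝ)) : ((-1:ℝ):WithBot ℝ) ≤ 0) x
    _ = x := add_zero x

lemma mu_inj : Function.Injective muMap := by
  intro v w h
  funext i
  have hi := congrFun h i
  by_cases h2 : i = 2
  · subst h2
    simp only [muMap, if_pos rfl] at hi
    exact WithBot.add_right_cancel (by simp) hi
  · simpa [muMap, h2] using hi

lemma absorbA (a b c d : WithBot ℝ) :
    (a ⊔ b ⊔ c ⊔ d) + 1 = (1 + (a ⊔ b ⊔ c ⊔ d)) ⊔ b ⊔ (c ⊔ d) := by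
  refine le_antisymm ?_ ?_
  · exact le_sup_of_le_left (le_sup_of_le_left (le_of_eq (add_comm _ 1)))
  · refine sup_le (sup_le (le_of_eq (add_comm 1 _)) ?_) ?_
    · exact le_trans (le_sup_of_le_left (le_sup_of_le_left le_sup_right)) (wb_le_add_one _)
    · exact le_trans (sup_le (le_sup_of_le_left le_sup_right) le_sup_right) (wb_le_add_one _)


/-- Example 6.2: with `A` having columns `(-∞,-∞,0,-∞), (0,-∞,0,-∞),
(1,1,0,-∞), (1,1,0,-∞)` and `B` having columns `(-∞,-∞,0,-∞), (0,-∞,0,-∞),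
(1,1,0,-∞), (1,0,0,-∞)`, the map `μ` maps `C_T(A)` injectively into `C_T(B)`,
and also maps `C_T(B)` injectively into `C_T(A)`. -/
theorem stmt18 :
    let A : Matrix (Fin 4) (Fin 4) (WithBot ℝ) :=
      (Matrix.of ![![⊥, ⊥, (0 : WithBot ℝ), ⊥], ![(0 : WithBot ℝ), ⊥, 0, ⊥],
        ![(1 : WithBot ℝ), 1, 0, ⊥], ![(1 : WithBot ℝ), 1, 0, ⊥]]).transpose
    let B : Matrix (Fin 4) (Fin 4) (WithBot ℝ) :=
      (Matrix.of ![![⊥, ⊥, (0 : WithBot ℝ), ⊥], ![(0 : WithBot ℝ), ⊥, 0, ⊥],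
        ![(1 : WithBot ℝ), 1, 0, ⊥], ![(1 : WithBot ℝ), 0, 0, ⊥]]).transpose
    (∀ v ∈ tropColSpace A, muMap v ∈ tropColSpace B) ∧
      Set.InjOn muMap (tropColSpace A) ∧
      (∀ v ∈ tropColSpace B, muMap v ∈ tropColSpace A) ∧
      Set.InjOn muMap (tropColSpace B) := by
  intro A B
  have hA : A = Matrix.of
      ![![⊥,(0:WithBot ℝ),1,1],![⊥,⊥,1,1],![(0:WithBot ℝ),0,0,0],![⊥,⊥,⊥,⊥]] := by
    funext i k; fin_cases i <;> fin_cases k <;> rfl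
  have hB : B = Matrix.of
      ![![⊥,(0:WithBot ℝ),1,1],![⊥,⊥,1,0],![(0:WithBot ℝ),0,0,0],![⊥,⊥,⊥,⊥]] := by
    funext i k; fin_cases i <;> fin_cases k <;> rfl
  refine ⟨?_, mu_inj.injOn, ?_, mu_inj.injOn⟩
  · -- A → B
    intro v hv
    rw [hA] at hv
    rw [tropColSpace, Set.mem_setOf_eq, hB]
    obtain ⟨lam, rfl⟩ := hv
    refine ⟨![1 + (lam 0 ⊔ lam 1 ⊔ lam 2 ⊔ lam 3), lam 1, lam 2 ⊔ lam 3, ⊥], ?_⟩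
    funext i
    fin_cases i <;>
      simp [muMap, sup4, Matrix.of_apply, WithBot.add_bot, WithBot.bot_add, add_zero]
    · rw [sup_assoc, max_add_add_right]
    · exact max_add_add_right (lam 2) (lam 3) 1
    · exact absorbA _ _ _ _
  · -- B → A
    intro v hv
    rw [hB] at hv
    rw [tropColSpace, Set.mem_setOf_eq, hA]
    obtain ⟨lam, rfl⟩ := hv
    refine ⟨![1 + (lam 0 ⊔ lam 1 ⊔ lam 2 ⊔ lam 3), lam 1 ⊔ (lam 3 + 1),
      lam 2 ⊔ (lam 3 + ((-1:ℝ):WithBot ℝ)), ⊥], ?_⟩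
    funext i
    fin_cases i <;>
      simp [muMap, sup4, Matrix.of_apply, WithBot.add_bot, WithBot.bot_add, add_zero,
        wb_neg_one_cancel]
    · -- coord 0
      rw [← max_add_add_right, wb_neg_one_cancel]
      refine le_antisymm (sup_le (sup_le ?_ ?_) ?_) (sup_le (sup_le ?_ ?_) (sup_le ?_ ?_))
      · exact le_sup_of_le_left le_sup_left
      · exact le_sup_of_le_right le_sup_left
      · exact le_sup_of_le_left le_sup_right
      · exact le_sup_of_le_left le_sup_left
      · exact le_sup_right
      · exact le_sup_of_le_left le_sup_right
      · exact le_trans (wb_le_add_one _) le_sup_right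
    · -- coord 1
      rw [← max_add_add_right, wb_neg_one_cancel]
    · -- coord 2
      have h1 : lam 1 ≤ lam 0 ⊔ lam 1 ⊔ lam 2 ⊔ lam 3 :=
        le_sup_of_le_left (le_sup_of_le_left le_sup_right)
      have h2 : lam 2 ≤ lam 0 ⊔ lam 1 ⊔ lam 2 ⊔ lam 3 := le_sup_of_le_left le_sup_right
      have h3 : lam 3 ≤ lam 0 ⊔ lam 1 ⊔ lam 2 ⊔ lam 3 := le_sup_right
      refine le_antisymm (le_sup_of_le_left (le_sup_of_le_left (le_of_eq (add_comm _ _))))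
        (sup_le (sup_le (le_of_eq (add_comm _ _)) (sup_le ?_ ?_)) (sup_le ?_ ?_))
      · exact le_trans h1 (wb_le_add_one _)
      · exact add_le_add_left h3 1
      · exact le_trans h2 (wb_le_add_one _)
      · exact le_trans (wb_add_neg_one_le _) (le_trans h3 (wb_le_add_one _))
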